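/- (Fock realization of the finite W algebra W₃⁽²⁾.) Let λ, s ∈ ℂ and define the following ℂ-linear operators on ℂ[z], writing D = d/dz and Z = multiplication by z: H = (λ − (2/3)s + 1)·id − 2ZD, E = (2 − 2s + λ)·D − 2ZD², F = (2/3)(λZ − Z²D), and C = (−(1/3)λ² − (2/3)λ − (4/9)s² + (4/3)s − 1)·id. Then as operators on ℂ[z] they satisfy [H,E] = 2E, [H,F] = −2F, and [E,F] = H² + C, where [a,b] = ab − ba. -/
import Mathlib

set_option maxRecDepth 10000

/-- Fock realization of the finite W algebra `W₃⁽²⁾` on `ℂ[z]`: the operators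
`H = (λ - (2/3)s + 1)·id - 2ZD`, `E = (2 - 2s + λ)D - 2ZD²`, `F = (2/3)(λZ - Z²D)`,
`C = (-(1/3)λ² - (2/3)λ - (4/9)s² + (4/3)s - 1)·id`
satisfy `[H,E] = 2E`, `[H,F] = -2F`, `[E,F] = H² + C`. -/
theorem fock_realization_W3_2
    (lam s : ℂ)
    (D Z H E F C : Module.End ℂ (Polynomial ℂ))
    (hD : D = (Polynomial.derivative : Polynomial ℂ →ₗ[ℂ] Polynomial ℂ))
    (hZ : Z = LinearMap.mulLeft ℂ (Polynomial.X : Polynomial ℂ))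
    (hH : H = (lam - (2/3 : ℂ) * s + 1) • (1 : Module.End ℂ (Polynomial ℂ))
        - (2 : ℂ) • (Z * D))
    (hE : E = (2 - 2 * s + lam) • D - (2 : ℂ) • (Z * D * D))
    (hF : F = (2/3 : ℂ) • (lam • Z - Z * Z * D))
    (hC : C = (-(1/3 : ℂ) * lam ^ 2 - (2/3 : ℂ) * lam - (4/9 : ℂ) * s ^ 2
        + (4/3 : ℂ) * s - 1) • (1 : Module.End ℂ (Polynomial ℂ))) :
    H * E - E * H = 2 * E ∧
    H * F - F * H = -(2 * F) ∧
    E * F - F * E = H ^ 2 + C := by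
  subst hD hZ hH hE hF hC
  refine ⟨?_, ?_, ?_⟩ <;>
  · ext n : 2
    simp only [pow_two, LinearMap.comp_apply, Module.End.mul_apply, LinearMap.sub_apply,
      LinearMap.smul_apply, LinearMap.add_apply, LinearMap.neg_apply, Module.End.one_apply,
      Module.End.natCast_apply, Module.End.ofNat_apply, Polynomial.derivative_monomial,
      LinearMap.mulLeft_apply, mul_sub, mul_add, Polynomial.X_mul_monomial,
      Polynomial.smul_monomial, map_sub, map_add, Polynomial.derivative_smul,
      smul_sub, smul_eq_mul]
    simp only [← Polynomial.smul_X_eq_monomial]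
    rcases n with _ | _ | _ | n <;>
    · try simp only [Nat.add_sub_cancel, show ∀ k, k + 3 - 1 = k + 2 from fun k => rfl,
        show ∀ k, k + 2 - 1 = k + 1 from fun k => rfl, Nat.sub_self, Nat.zero_sub,
        pow_zero, pow_succ, Nat.cast_add, Nat.cast_ofNat, Nat.cast_one, Nat.cast_zero]
      match_scalars <;> (push_cast [smul_eq_mul]; ring)
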